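/- arXiv:1306.2032 — 2 statements merged into one kernel-verified Lean document; each statement's English description precedes it below -/
import Mathlib

section
/- Assume (Zhang-type hypothesis) that for every integer q ≥ 1 coprime to the product h_1···h_k of an admissible tuple H = {h_1, ..., h_k}, there exist infinitely many n such that {qn + h_1, ..., qn + h_k} contains at least two primes. Then for any admissible set H and any m ≥ 1, the set m·σ(H) = {m(h_j − h_i) : h_i < h_j, h_i, h_j ∈ H} contains a Polignac number, i.e., an even number d such that p_{n+1} − p_n = d for infinitely many n. -/
/-- A finite set of natural numbers is admissible if for every prime `p`, its
elements occupy fewer than `p` residue classes modulo `p`. -/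
def AdmissibleN (H : Finset ℕ) : Prop :=
  ∀ p : ℕ, p.Prime → (H.image (Nat.cast : ℕ → ZMod p)).card < p

/-- A Polignac number: a positive even number occurring infinitely often as a
gap between consecutive primes. -/
def PolignacNumber (d : ℕ) : Prop :=
  0 < d ∧ Even d ∧
    {n : ℕ | Nat.nth Nat.Prime (n + 1) - Nat.nth Nat.Prime n = d}.Infinite

lemma count_add_of_no_primes {P d : ℕ} (hP : P.Prime) (hd : 0 < d)
    (hmid : ∀ u, P < u → u < P + d → ¬ u.Prime) :
    Nat.count Nat.Prime (P + d) = Nat.count Nat.Prime P + 1 := by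
  induction d with
  | zero => omega
  | succ j ih =>
    rcases Nat.eq_zero_or_pos j with rfl | hj
    · simp [Nat.count_succ, hP]
    · rw [← Nat.add_assoc, Nat.count_succ, ih hj (fun u h1 h2 => hmid u h1 (by omega)),
        if_neg (hmid (P + j) (by omega) (by omega))]

lemma polignac_of_gaps {d : ℕ} (hd : 0 < d)
    (hinf : {P : ℕ | P.Prime ∧ (P + d).Prime ∧ ∀ u, P < u → u < P + d → ¬ u.Prime}.Infinite) :
    {n : ℕ | Nat.nth Nat.Prime (n + 1) - Nat.nth Nat.Prime n = d}.Infinite := by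
  apply Set.Infinite.mono ?_ (hinf.image (f := Nat.count Nat.Prime) ?_)
  · rintro n ⟨P, ⟨hP, hPd, hmid⟩, rfl⟩
    have h1 : Nat.nth Nat.Prime (Nat.count Nat.Prime P) = P := Nat.nth_count hP
    have h2 : Nat.nth Nat.Prime (Nat.count Nat.Prime P + 1) = P + d := by
      rw [← count_add_of_no_primes hP hd hmid]
      exact Nat.nth_count hPd
    simp only [Set.mem_setOf_eq, h1, h2]
    omega
  · intro x hx y hy hxy
    have := Nat.nth_count hx.1
    rw [hxy, Nat.nth_count hy.1] at this
    exact this.symm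

lemma infinite_fiber {β : Type*} [DecidableEq β] {N : Set ℕ} (hN : N.Infinite) (F : Finset β)
    (p : ℕ → β → Prop) (hall : ∀ n ∈ N, ∃ c ∈ F, p n c) :
    ∃ c ∈ F, {n | n ∈ N ∧ p n c}.Infinite := by
  by_contra hcon
  push_neg at hcon
  have : N ⊆ ⋃ c ∈ F, {n | n ∈ N ∧ p n c} := by
    intro n hn
    obtain ⟨c, hc, hpc⟩ := hall n hn
    exact Set.mem_biUnion hc ⟨hn, hpc⟩
  exact hN (Set.Finite.subset (Set.Finite.biUnion F.finite_toSet
    (fun c hc => hcon c hc)) this)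

lemma admissible_affine {H : Finset ℕ} (hH : AdmissibleN H) (a m : ℕ) :
    AdmissibleN (H.image (fun h => a + m * h)) := by
  intro p hp
  have : (H.image (fun h => a + m * h)).image (Nat.cast : ℕ → ZMod p)
      = (H.image (Nat.cast : ℕ → ZMod p)).image (fun x => (a : ZMod p) + (m : ZMod p) * x) := by
    rw [Finset.image_image, Finset.image_image]
    apply Finset.image_congr
    intro h _
    simp only [Function.comp]
    push_cast
    ring
  rw [this]
  exact lt_of_le_of_lt (Finset.card_image_le) (hH p hp)

theorem polignac_in_m_sigma
    (zhang : ∀ H : Finset ℕ, (∀ h ∈ H, 0 < h) → AdmissibleN H →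
      ∀ q : ℕ, 1 ≤ q → Nat.Coprime q (∏ h ∈ H, h) →
        {n : ℕ | 2 ≤ (H.filter (fun h => Nat.Prime (q * n + h))).card}.Infinite)
    (H : Finset ℕ) (hpos : ∀ h ∈ H, 0 < h) (hH : AdmissibleN H)
    (hcard : 2 ≤ H.card) (m : ℕ) (hm : 1 ≤ m) :
    ∃ hi ∈ H, ∃ hj ∈ H, hi < hj ∧ PolignacNumber (m * (hj - hi)) := by
  classical
  have hne : H.Nonempty := Finset.card_pos.mp (by omega)
  set hmax := H.max' hne with hhmax
  set B := m * hmax with hB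
  -- the auxiliary primes
  set f : ℕ → ℕ := fun s => Nat.nth Nat.Prime (B + 1 + s) with hf
  have hfprime : ∀ s, (f s).Prime := fun s =>
    Nat.nth_mem_of_infinite Nat.infinite_setOf_prime _
  have hfinj : Function.Injective f := fun s t h => by
    have := (Nat.nth_strictMono Nat.infinite_setOf_prime).injective h
    omega
  have hfB : ∀ s, B < f s := fun s =>
    lt_of_lt_of_le (by omega)
      ((Nat.nth_strictMono Nat.infinite_setOf_prime).le_apply (x := B + 1 + s))
  -- the set of offsets to cover
  set S : Finset ℕ := (Finset.range (B + 1)).filter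
    (fun s => s ∉ H.image (fun h => m * h)) with hS
  set q : ℕ := ∏ s ∈ S, f s with hq
  have hq0 : 0 < q := Finset.prod_pos (fun s _ => (hfprime s).pos)
  have hfq : ∀ s ∈ S, f s ∣ q := fun s hs => Finset.dvd_prod_of_mem f hs
  -- CRT
  obtain ⟨a0, ha0⟩ := Nat.chineseRemainderOfFinset (fun s => (f s - 1) * s) f S
    (fun s _ => (hfprime s).ne_zero)
    (fun s hs t ht hst => (Nat.coprime_primes (hfprime s) (hfprime t)).mpr
      (fun he => hst (hfinj he)))
  set a : ℕ := a0 + q with ha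
  have ha1 : 1 ≤ a := by omega
  have hdvd : ∀ s ∈ S, f s ∣ a + s := by
    intro s hs
    have e1 : a0 + s ≡ (f s - 1) * s + s [MOD f s] := (ha0 s hs).add_right s
    have e2 : (f s - 1) * s + s = f s * s := by
      have : f s - 1 + 1 = f s := Nat.sub_add_cancel (hfprime s).pos
      calc (f s - 1) * s + s = (f s - 1 + 1) * s := by ring
        _ = f s * s := by rw [this]
    have e3 : a + s ≡ a0 + s [MOD f s] := by
      have : q ≡ 0 [MOD f s] := (Nat.modEq_zero_iff_dvd).mpr (hfq s hs)
      calc a + s = a0 + s + q := by omega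
        _ ≡ a0 + s + 0 [MOD f s] := (this.add_left _)
        _ = a0 + s := by omega
    have e4 : a + s ≡ 0 [MOD f s] := by
      calc a + s ≡ (f s - 1) * s + s [MOD f s] := e3.trans e1
        _ = f s * s := e2
        _ ≡ 0 [MOD f s] := (Nat.modEq_zero_iff_dvd).mpr ⟨s, rfl⟩
    exact (Nat.modEq_zero_iff_dvd).mp e4
  -- the shifted tuple
  set T : Finset ℕ := H.image (fun h => a + m * h) with hT
  have hTpos : ∀ t ∈ T, 0 < t := by
    intro t ht
    obtain ⟨h, _, rfl⟩ := Finset.mem_image.mp ht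
    omega
  have hTadm : AdmissibleN T := admissible_affine hH a m
  have hmhB : ∀ h ∈ H, m * h ≤ B := fun h hh =>
    Nat.mul_le_mul_left m (H.le_max' h hh)
  have hcop : Nat.Coprime q (∏ t ∈ T, t) := by
    rw [hq]
    refine Nat.coprime_prod_left_iff.mpr fun s hs => ?_
    refine Nat.coprime_prod_right_iff.mpr fun t ht => ?_
    obtain ⟨h, hh, rfl⟩ := Finset.mem_image.mp ht
    refine ((hfprime s).coprime_iff_not_dvd).mpr fun hdv => ?_
    have h1 : f s ∣ a + s := hdvd s hs
    have hsB : s ≤ B := by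
      have := (Finset.mem_filter.mp hs).1
      simpa using Nat.lt_succ_iff.mp (Finset.mem_range.mp this)
    have hsne : s ≠ m * h := by
      intro he
      exact (Finset.mem_filter.mp hs).2 (Finset.mem_image.mpr ⟨h, hh, he.symm⟩)
    have hmh : m * h ≤ B := hmhB h hh
    rcases Nat.lt_or_ge s (m * h) with hlt | hge
    · have : f s ∣ (a + m * h) - (a + s) := Nat.dvd_sub hdv h1
      have h2 : f s ≤ (a + m * h) - (a + s) := Nat.le_of_dvd (by omega) this
      have := hfB s
      omega
    · have hlt : m * h < s := by omega
      have : f s ∣ (a + s) - (a + m * h) := Nat.dvd_sub h1 hdv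
      have h2 : f s ≤ (a + s) - (a + m * h) := Nat.le_of_dvd (by omega) this
      have := hfB s
      omega
  have hN := zhang T hTpos hTadm q hq0 hcop
  have hN' : (({n : ℕ | 2 ≤ (T.filter (fun h => Nat.Prime (q * n + h))).card}) \ {0}).Infinite :=
    hN.diff (Set.finite_singleton 0)
  -- the key claim: for each good n, find a pair giving a consecutive prime gap
  have key : ∀ n ∈ ({n : ℕ | 2 ≤ (T.filter (fun h => Nat.Prime (q * n + h))).card} \ {0} : Set ℕ),
      ∃ c ∈ H ×ˢ H, c.1 < c.2 ∧ (q * n + (a + m * c.1)).Prime ∧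
        (q * n + (a + m * c.2)).Prime ∧
        ∀ u, q * n + (a + m * c.1) < u → u < q * n + (a + m * c.2) → ¬ u.Prime := by
    rintro n ⟨hn, hn0⟩
    simp only [Set.mem_setOf_eq] at hn
    have hn1 : 1 ≤ n := by
      rcases Nat.eq_zero_or_pos n with rfl | h
      · exact absurd rfl hn0
      · exact h
    set O : Finset ℕ := T.filter (fun t => Nat.Prime (q * n + t)) with hO
    have hOcard : 2 ≤ O.card := hn
    have hOne : O.Nonempty := Finset.card_pos.mp (by omega)
    set t1 := O.min' hOne with ht1
    have ht1O : t1 ∈ O := O.min'_mem hOne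
    have hOe : (O.erase t1).Nonempty := Finset.card_pos.mp (by
      rw [Finset.card_erase_of_mem ht1O]; omega)
    set t2 := (O.erase t1).min' hOe with ht2
    have ht2e : t2 ∈ O.erase t1 := (O.erase t1).min'_mem hOe
    have ht2O : t2 ∈ O := Finset.mem_of_mem_erase ht2e
    have ht1t2 : t1 < t2 :=
      lt_of_le_of_ne (O.min'_le t2 ht2O) (Finset.ne_of_mem_erase ht2e).symm
    obtain ⟨h1, hh1, he1⟩ := Finset.mem_image.mp (Finset.mem_filter.mp ht1O).1
    obtain ⟨h2, hh2, he2⟩ := Finset.mem_image.mp (Finset.mem_filter.mp ht2O).1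
    have hh12 : h1 < h2 := by
      have : m * h1 < m * h2 := by omega
      exact Nat.lt_of_mul_lt_mul_left this
    refine ⟨(h1, h2), Finset.mem_product.mpr ⟨hh1, hh2⟩, hh12, ?_, ?_, ?_⟩
    · rw [he1]; exact (Finset.mem_filter.mp ht1O).2
    · rw [he2]; exact (Finset.mem_filter.mp ht2O).2
    · intro u hu1 hu2 hup
      rw [he1] at hu1
      rw [he2] at hu2
      -- u = q*n + w with t1 < w < t2
      have hqn : q * n + t1 < u := hu1
      set w := u - q * n with hw
      have hwu : u = q * n + w := by omega
      have hwt1 : t1 < w := by omega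
      have hwt2 : w < t2 := by omega
      have hwa : a < w := by omega
      set s' := w - a with hs'
      have hws' : w = a + s' := by omega
      have hs'B : s' < B + 1 := by
        have : m * h2 ≤ B := hmhB h2 hh2
        omega
      by_cases hmem : s' ∈ H.image (fun h => m * h)
      · obtain ⟨h3, hh3, he3⟩ := Finset.mem_image.mp hmem
        have ht3T : a + m * h3 ∈ T := Finset.mem_image.mpr ⟨h3, hh3, rfl⟩
        have ht3O : a + m * h3 ∈ O := Finset.mem_filter.mpr ⟨ht3T, by
          rw [show a + m * h3 = w from by omega, ← hwu]; exact hup⟩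
        have ht3ne : a + m * h3 ≠ t1 := by omega
        have := (O.erase t1).min'_le _ (Finset.mem_erase.mpr ⟨ht3ne, ht3O⟩)
        omega
      · have hs'S : s' ∈ S := Finset.mem_filter.mpr ⟨Finset.mem_range.mpr hs'B, hmem⟩
        have hd1 : f s' ∣ u := by
          rw [hwu, hws']
          exact Nat.dvd_add (Dvd.dvd.mul_right (hfq s' hs'S) n) (hdvd s' hs'S)
        have hfu : f s' ≤ q := Nat.le_of_dvd hq0 (hfq s' hs'S)
        have hqn' : q ≤ q * n := Nat.le_mul_of_pos_right q hn1
        have hlt : f s' < u := by omega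
        rcases (hup.eq_one_or_self_of_dvd (f s') hd1) with h | h
        · exact (hfprime s').one_lt.ne' h
        · omega
  -- pigeonhole over the finitely many pairs
  obtain ⟨c, hcF, hcinf⟩ := infinite_fiber hN' (H ×ˢ H)
    (fun n c => c.1 < c.2 ∧ (q * n + (a + m * c.1)).Prime ∧
        (q * n + (a + m * c.2)).Prime ∧
        ∀ u, q * n + (a + m * c.1) < u → u < q * n + (a + m * c.2) → ¬ u.Prime) key
  obtain ⟨hi, hj⟩ := c
  obtain ⟨hhi, hhj⟩ := Finset.mem_product.mp hcF
  -- the fiber set is nonempty, so hi < hj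
  obtain ⟨n0, _, hn0lt, -⟩ := hcinf.nonempty
  refine ⟨hi, hhi, hj, hhj, hn0lt, ?_⟩
  set d := m * (hj - hi) with hd
  have hdpos : 0 < d := Nat.mul_pos hm (by omega)
  have hmd : a + m * hi + d = a + m * hj := by
    have : m * hj = m * hi + m * (hj - hi) := by
      rw [← Nat.mul_add, Nat.add_sub_cancel' hn0lt.le]
    omega
  have heven : Even d := by
    have h2 := hH 2 Nat.prime_two
    have hc1 : (H.image (Nat.cast : ℕ → ZMod 2)).card ≤ 1 := by omega
    have hcast : (hi : ZMod 2) = (hj : ZMod 2) :=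
      Finset.card_le_one.mp hc1 _ (Finset.mem_image_of_mem _ hhi) _
        (Finset.mem_image_of_mem _ hhj)
    have hmod : hi % 2 = hj % 2 := (ZMod.natCast_eq_natCast_iff hi hj 2).mp hcast
    rw [hd, Nat.even_mul, Nat.even_iff, Nat.even_iff]
    omega
  refine ⟨hdpos, heven, polignac_of_gaps hdpos ?_⟩
  apply Set.Infinite.mono ?_ (hcinf.image (f := fun n => q * n + (a + m * hi)) ?_)
  · rintro P ⟨n, ⟨-, -, hp1, hp2, hmid⟩, rfl⟩
    beta_reduce
    refine ⟨hp1, ?_, ?_⟩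
    · rw [show q * n + (a + m * hi) + d = q * n + (a + m * hj) from by omega]
      exact hp2
    · intro u h1 h2
      have e : q * n + (a + m * hi) + d = q * n + (a + m * hj) := by
        rw [add_assoc, hmd]
      exact hmid u h1 (e ▸ h2)
  · intro x _ y _ hxy
    simp only at hxy
    have : q * x = q * y := by omega
    exact Nat.eq_of_mul_eq_mul_left hq0 this
end

section
/- Assume (as a hypothesis) Zhang's theorem in the arithmetic-progression form: for k_0-element admissible H = {h_1,...,h_{k_0}} and q ≥ 1 with gcd(q, h_1···h_{k_0}) = 1, there are infinitely many n such that {qn + h_1, ..., qn + h_{k_0}} contains two primes. Then for any b, q with 0 ≤ b < q and gcd(b, q) = 1, there exist infinitely many pairs of primes P < Q, both congruent to b modulo q, with (Q − P)/q bounded by a constant depending only on an admissible k_0-tuple (e.g., Q − P ≤ q · (h_{k_0} − h_1)). -/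
theorem bounded_gaps_in_progressions (k0 : ℕ)
    (zhang : ∀ H : Finset ℕ, H.card = k0 → (∀ h ∈ H, 0 < h) → AdmissibleN H →
      ∀ q : ℕ, 1 ≤ q → Nat.Coprime q (∏ h ∈ H, h) →
        {n : ℕ | 2 ≤ (H.filter (fun h => Nat.Prime (q * n + h))).card}.Infinite)
    (H0 : Finset ℕ) (hcard : H0.card = k0) (hne : H0.Nonempty)
    (hpos : ∀ h ∈ H0, 0 < h) (hH0 : AdmissibleN H0) :
    ∀ b q : ℕ, b < q → Nat.Coprime b q →
      {P : ℕ | ∃ Q : ℕ, P.Prime ∧ Q.Prime ∧ P < Q ∧ P % q = b ∧ Q % q = b ∧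
        Q - P ≤ q * (H0.max' hne - H0.min' hne)}.Infinite := by
  intro b q hbq hcop
  have hq : 0 < q := lt_of_le_of_lt (Nat.zero_le b) hbq
  set f : ℕ → ℕ := fun h => b + q * h with hf
  have hinj : Function.Injective f := by
    intro x y hxy
    simp only [hf] at hxy
    exact Nat.eq_of_mul_eq_mul_left hq (by omega)
  set H : Finset ℕ := H0.image f with hH
  have hcard' : H.card = k0 := by
    rw [hH, Finset.card_image_of_injective _ hinj, hcard]
  have hpos' : ∀ h ∈ H, 0 < h := by
    intro h hh
    rw [hH, Finset.mem_image] at hh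
    obtain ⟨x, hx, rfl⟩ := hh
    exact Nat.add_pos_right _ (Nat.mul_pos hq (hpos x hx))
  have hadm : AdmissibleN H := by
    intro p hp
    haveI : Fact p.Prime := ⟨hp⟩
    by_cases hpq : (q : ZMod p) = 0
    · have hsub : H.image (Nat.cast : ℕ → ZMod p) ⊆ {(b : ZMod p)} := by
        intro x hx
        simp only [hH, Finset.image_image, Finset.mem_image, Function.comp] at hx
        obtain ⟨h, _, rfl⟩ := hx
        simp only [hf, Finset.mem_singleton]
        push_cast
        rw [hpq]
        ring
      calc (H.image (Nat.cast : ℕ → ZMod p)).card ≤ 1 :=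
            le_trans (Finset.card_le_card hsub) (by simp)
        _ < p := hp.one_lt
    · have him : H.image (Nat.cast : ℕ → ZMod p) =
          (H0.image (Nat.cast : ℕ → ZMod p)).image (fun x => (b : ZMod p) + q * x) := by
        rw [hH, Finset.image_image, Finset.image_image]
        apply Finset.image_congr
        intro x _
        simp only [Function.comp, hf]
        push_cast
        ring
      have ginj : Function.Injective (fun x : ZMod p => (b : ZMod p) + q * x) := by
        intro x y hxy
        simp only at hxy
        exact mul_left_cancel₀ hpq (by linear_combination hxy)
      rw [him, Finset.card_image_of_injective _ ginj]
      exact hH0 p hp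
  have hcop' : Nat.Coprime q (∏ h ∈ H, h) := by
    apply Nat.Coprime.prod_right
    intro h hh
    rw [hH, Finset.mem_image] at hh
    obtain ⟨x, _, rfl⟩ := hh
    simp only [hf, mul_comm q x]
    exact (Nat.coprime_add_mul_right_right q b x).mpr hcop.symm
  have hinf := zhang H hcard' hpos' hadm q hq hcop'
  apply Set.infinite_of_forall_exists_gt
  intro a
  obtain ⟨n, hn, han⟩ := hinf.exists_gt a
  have hn2 : 2 ≤ (H.filter (fun h => Nat.Prime (q * n + h))).card := hn
  obtain ⟨x, hx, y, hy, hxy⟩ := Finset.one_lt_card.mp hn2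
  simp only [Finset.mem_filter, hH, Finset.mem_image] at hx hy
  obtain ⟨⟨h1, hh1, rfl⟩, hPx⟩ := hx
  obtain ⟨⟨h2, hh2, rfl⟩, hPy⟩ := hy
  have hne12 : h1 ≠ h2 := fun e => hxy (by rw [e])
  -- WLOG h1 < h2
  rcases Nat.lt_or_ge h1 h2 with hlt | hge
  · refine ⟨q * n + f h1, ⟨q * n + f h2, hPx, hPy, ?_, ?_, ?_, ?_⟩, ?_⟩
    · have hmul : q * h1 < q * h2 := mul_lt_mul_of_pos_left hlt hq
      simp only [hf]; omega
    · have : q * n + f h1 = b + (n + h1) * q := by simp only [hf]; ring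
      rw [this, Nat.add_mul_mod_self_right, Nat.mod_eq_of_lt hbq]
    · have : q * n + f h2 = b + (n + h2) * q := by simp only [hf]; ring
      rw [this, Nat.add_mul_mod_self_right, Nat.mod_eq_of_lt hbq]
    · have h1' : H0.min' hne ≤ h1 := H0.min'_le _ hh1
      have h2' : h2 ≤ H0.max' hne := H0.le_max' _ hh2
      have hmul : q * h1 ≤ q * h2 := Nat.mul_le_mul_left q hlt.le
      have : q * n + f h2 - (q * n + f h1) = q * (h2 - h1) := by
        simp only [hf]; rw [Nat.mul_sub]; omega
      rw [this]
      exact Nat.mul_le_mul_left q (by omega)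
    · have : n ≤ q * n := Nat.le_mul_of_pos_left n hq
      have : 0 < f h1 := Nat.add_pos_right _ (Nat.mul_pos hq (hpos h1 hh1))
      omega
  · have hlt : h2 < h1 := lt_of_le_of_ne hge (Ne.symm hne12)
    refine ⟨q * n + f h2, ⟨q * n + f h1, hPy, hPx, ?_, ?_, ?_, ?_⟩, ?_⟩
    · have hmul : q * h2 < q * h1 := mul_lt_mul_of_pos_left hlt hq
      simp only [hf]; omega
    · have : q * n + f h2 = b + (n + h2) * q := by simp only [hf]; ring
      rw [this, Nat.add_mul_mod_self_right, Nat.mod_eq_of_lt hbq]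
    · have : q * n + f h1 = b + (n + h1) * q := by simp only [hf]; ring
      rw [this, Nat.add_mul_mod_self_right, Nat.mod_eq_of_lt hbq]
    · have h2' : H0.min' hne ≤ h2 := H0.min'_le _ hh2
      have h1' : h1 ≤ H0.max' hne := H0.le_max' _ hh1
      have hmul : q * h2 ≤ q * h1 := Nat.mul_le_mul_left q hlt.le
      have : q * n + f h1 - (q * n + f h2) = q * (h1 - h2) := by
        simp only [hf]; rw [Nat.mul_sub]; omega
      rw [this]
      exact Nat.mul_le_mul_left q (by omega)
    · have : n ≤ q * n := Nat.le_mul_of_pos_left n hq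
      have : 0 < f h2 := Nat.add_pos_right _ (Nat.mul_pos hq (hpos h2 hh2))
      omega
end
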